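/- Let Γ be a GQ of order (q²,q) with doubly subtended subquadrangle Γ' of order (q,q) and involutory automorphism σ fixing Γ' pointwise. For an external point P with image P̄ = P^σ, the characteristic vector χ_{[P]} of the external lines through P satisfies χ_{[P]}A₃ = j + (q−2)χ_{[P]} − χ_W − χ_{[P̄]}, where W is the set of external lines concurrent with the unique line on P meeting Γ' but incident with neither P nor P̄. -/

import Mathlib

structure GenQuad (P L : Type*) (I : P → L → Prop) (s t : ℕ) : Prop where
  unique_line : ∀ ⦃p q : P⦄, p ≠ q → ∀ ⦃l m : L⦄, I p l → I q l → I p m → I q m → l = m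
  point_lines : ∀ p : P, {l : L | I p l}.ncard = t + 1
  line_points : ∀ l : L, {p : P | I p l}.ncard = s + 1
  gq : ∀ (p : P) (l : L), ¬ I p l → ∃! r : P, I r l ∧ ∃ m : L, I p m ∧ I r m

def Concurrent {P L : Type*} (I : P → L → Prop) (k l : L) : Prop :=
  k ≠ l ∧ ∃ p : P, I p k ∧ I p l

open scoped Classical in
/-- For an external point `p0` with image `pbar` under the involution, the unique line
`m0` through `p0` meeting `Γ'` also passes through `pbar`, and
`χ_{[p0]} A₃ = j + (q-2) χ_{[p0]} - χ_W - χ_{[pbar]}` on external lines, where `W` is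
the set of external lines concurrent with `m0` but incident with neither `p0` nor
`pbar`. -/
theorem statement_11 {P L : Type*} [Fintype L] {I : P → L → Prop} {q : ℕ}
    (hΓ : GenQuad P L I (q ^ 2) q)
    (P' : Set P)
    (p0 pbar : P) (hp0 : p0 ∉ P') (hpbar : pbar ∉ P') (hpp : p0 ≠ pbar)
    (m0 : L) (hm0p0 : I p0 m0) (hm0pbar : I pbar m0) (hm0meets : ∃ x ∈ P', I x m0)
    (hm0uniq : ∀ l : L, I p0 l → (∃ x ∈ P', I x l) → l = m0)
    (hm0uniq' : ∀ l : L, I pbar l → (∃ x ∈ P', I x l) → l = m0) :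
    ∀ n : L, (∀ p ∈ P', ¬ I p n) →
      (∑ k : L, (if (∀ p ∈ P', ¬ I p k) ∧ I p0 k then (1 : ℝ) else 0) *
          (if (∀ p ∈ P', ¬ I p k) ∧ Concurrent I k n then 1 else 0))
        = 1 + ((q : ℝ) - 2) * (if I p0 n then (1 : ℝ) else 0)
          - (if Concurrent I n m0 ∧ ¬ I p0 n ∧ ¬ I pbar n then (1 : ℝ) else 0)
          - (if I pbar n then (1 : ℝ) else 0) := by
  classical
  intro n hn
  obtain ⟨x0, hx0, hx0m⟩ := hm0meets
  have hm0notext : ¬ (∀ p ∈ P', ¬ I p m0) := fun h => h x0 hx0 hx0m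
  have hm0n : m0 ≠ n := fun h => hm0notext (h ▸ hn)
  have hprod : ∀ k : L,
      (if (∀ p ∈ P', ¬ I p k) ∧ I p0 k then (1 : ℝ) else 0) *
        (if (∀ p ∈ P', ¬ I p k) ∧ Concurrent I k n then 1 else 0)
      = if (∀ p ∈ P', ¬ I p k) ∧ I p0 k ∧ Concurrent I k n then 1 else 0 := by
    intro k
    by_cases h1 : (∀ p ∈ P', ¬ I p k) ∧ I p0 k
    · by_cases h2 : (∀ p ∈ P', ¬ I p k) ∧ Concurrent I k n
      · rw [if_pos h1, if_pos h2, if_pos ⟨h1.1, h1.2, h2.2⟩]; ring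
      · rw [if_pos h1, if_neg h2, if_neg (fun h => h2 ⟨h.1, h.2.2⟩)]; ring
    · rw [if_neg h1, zero_mul, if_neg (fun h => h1 ⟨h.1, h.2.1⟩)]
  rw [Finset.sum_congr rfl (fun k _ => hprod k), Finset.sum_boole]
  set S := Finset.univ.filter
    (fun k => (∀ p ∈ P', ¬ I p k) ∧ I p0 k ∧ Concurrent I k n) with hSdef
  by_cases hp0n : I p0 n
  · -- n passes through p0
    have hpbarn : ¬ I pbar n := by
      intro h
      exact hm0notext ((hΓ.unique_line hpp hp0n h hm0p0 hm0pbar) ▸ hn)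
    have hS : S = (Finset.univ.filter (fun k => I p0 k)) \ {m0, n} := by
      ext k
      simp only [hSdef, Finset.mem_filter]
      simp only [hSdef, Finset.mem_filter, Finset.mem_univ, true_and, Finset.mem_sdiff,
        Finset.mem_insert, Finset.mem_singleton, Concurrent]
      constructor
      · rintro ⟨hEk, hk0, hkn, -⟩
        exact ⟨hk0, fun h => h.elim (fun h' => hm0notext (h' ▸ hEk)) hkn⟩
      · rintro ⟨hk0, hne⟩
        push_neg at hne
        exact ⟨fun p hp hpk => hne.1 (hm0uniq k hk0 ⟨p, hp, hpk⟩), hk0, hne.2,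
          p0, hk0, hp0n⟩
    have hcard1 : (Finset.univ.filter (fun k => I p0 k)).card = q + 1 := by
      have h := hΓ.point_lines p0
      rwa [Set.ncard_eq_toFinset_card', Set.toFinset_setOf] at h
    have hsub : ({m0, n} : Finset L) ⊆ Finset.univ.filter (fun k => I p0 k) := by
      intro k hk
      simp only [Finset.mem_insert, Finset.mem_singleton] at hk
      rcases hk with rfl | rfl <;> simp [hm0p0, hp0n]
    have hpair : ({m0, n} : Finset L).card = 2 := by
      rw [Finset.card_insert_of_notMem (by simpa using hm0n), Finset.card_singleton]
    have hq1 : 1 ≤ q := by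
      have h := Finset.card_le_card hsub
      rw [hcard1, hpair] at h
      omega
    rw [hS, Finset.card_sdiff_of_subset hsub, hcard1, hpair]
    have hW : ¬ (Concurrent I n m0 ∧ ¬ I p0 n ∧ ¬ I pbar n) := fun h => h.2.1 hp0n
    rw [if_pos hp0n, if_neg hW, if_neg hpbarn]
    have h2 : q + 1 - 2 = q - 1 := by omega
    rw [h2, Nat.cast_sub hq1]
    push_cast
    ring
  · -- n does not pass through p0
    obtain ⟨r, ⟨hrn, m, hmp0, hrm⟩, hruniq⟩ := hΓ.gq p0 n hp0n
    have hrp0 : r ≠ p0 := fun h => hp0n (h ▸ hrn)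
    by_cases hpbarn : I pbar n
    · -- pbar lies on n : the unique line through p0 concurrent with n is m0, not external
      have hSempty : S = ∅ := by
        rw [Finset.eq_empty_iff_forall_notMem]
        intro k hk
        simp only [hSdef, Finset.mem_filter] at hk
        simp only [hSdef, Finset.mem_filter, Finset.mem_univ, true_and, Concurrent] at hk
        obtain ⟨hEk, hk0, hkn, x, hxk, hxn⟩ := hk
        have hx : x = r := hruniq x ⟨hxn, k, hk0, hxk⟩
        have hpb : pbar = r := hruniq pbar ⟨hpbarn, m0, hm0p0, hm0pbar⟩
        have hxp0 : x ≠ p0 := fun h => hp0n (h ▸ hxn)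
        have hkm0 : k = m0 :=
          hΓ.unique_line hxp0 hxk hk0 (by rw [hx, ← hpb]; exact hm0pbar) hm0p0
        exact hm0notext (hkm0 ▸ hEk)
      have hW : ¬ (Concurrent I n m0 ∧ ¬ I p0 n ∧ ¬ I pbar n) := fun h => h.2.2 hpbarn
      rw [hSempty, if_neg hp0n, if_neg hW, if_pos hpbarn]
      norm_num
    · by_cases hcon : Concurrent I n m0
      · -- m0 is concurrent with n : again unique concurrent line through p0 is m0
        have hSempty : S = ∅ := by
          rw [Finset.eq_empty_iff_forall_notMem]
          intro k hk
          simp only [hSdef, Finset.mem_filter] at hk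
          simp only [hSdef, Finset.mem_filter, Finset.mem_univ, true_and, Concurrent] at hk
          obtain ⟨hEk, hk0, hkn, x, hxk, hxn⟩ := hk
          obtain ⟨hne, y, hyn, hym0⟩ := hcon
          have hx : x = r := hruniq x ⟨hxn, k, hk0, hxk⟩
          have hy : y = r := hruniq y ⟨hyn, m0, hm0p0, hym0⟩
          have hxp0 : x ≠ p0 := fun h => hp0n (h ▸ hxn)
          have hkm0 : k = m0 :=
            hΓ.unique_line hxp0 hxk hk0 (by rw [hx, ← hy]; exact hym0) hm0p0
          exact hm0notext (hkm0 ▸ hEk)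
        rw [hSempty, if_neg hp0n, if_pos ⟨hcon, hp0n, hpbarn⟩, if_neg hpbarn]
        norm_num
      · -- the unique concurrent line through p0 is m and it is external
        have hmn : m ≠ n := fun h => hp0n (h ▸ hmp0)
        have hmext : ∀ p ∈ P', ¬ I p m := by
          intro p hp hpm
          have hmm0 : m = m0 := hm0uniq m hmp0 ⟨p, hp, hpm⟩
          exact hcon ⟨hm0n.symm, r, hrn, hmm0 ▸ hrm⟩
        have hS : S = {m} := by
          ext k
          simp only [hSdef, Finset.mem_filter]
          simp only [hSdef, Finset.mem_filter, Finset.mem_univ, true_and,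
            Finset.mem_singleton, Concurrent]
          constructor
          · rintro ⟨hEk, hk0, hkn, x, hxk, hxn⟩
            have hx : x = r := hruniq x ⟨hxn, k, hk0, hxk⟩
            have hxp0 : x ≠ p0 := fun h => hp0n (h ▸ hxn)
            exact hΓ.unique_line hxp0 hxk hk0 (hx ▸ hrm) hmp0
          · rintro rfl
            exact ⟨hmext, hmp0, hmn, r, hrm, hrn⟩
        rw [hS, Finset.card_singleton, if_neg hp0n,
          if_neg (fun h => hcon h.1), if_neg hpbarn]
        norm_num
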